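/- Fix a coordinate i. If z, z' ∈ ℝ and the offset o is uniform on [0,β], then the probability that z and z' lie in different grid cells (i.e., their rounded-down grid points differ) is at most |z − z'|/β, provided |z − z'| ≤ β. -/

import Mathlib

open MeasureTheory Set

/-- The uniform probability measure on the interval `[a, b]`. -/
noncomputable def unifMeas (a b : ℝ) : Measure ℝ :=
  (ENNReal.ofReal (b - a))⁻¹ • volume.restrict (Icc a b)

/-- The largest grid point `o + jβ` (for `j : ℤ`) that is `≤ x`. -/
noncomputable def gridFloor (β o x : ℝ) : ℝ := o + β * ⌊(x - o) / β⌋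

lemma stmt1_aux (β : ℝ) (hβ : 0 < β) (z z' : ℝ) (hd0 : 0 ≤ z - z') (h : z - z' ≤ β) :
    unifMeas 0 β {o : ℝ | gridFloor β o z ≠ gridFloor β o z'}
      ≤ ENNReal.ofReal ((z - z') / β) := by
  set d := z - z' with hdef
  set m := ⌊z / β⌋ with hmdef
  set c := z - β * m with hcdef
  have hmle : (m : ℝ) ≤ z / β := Int.floor_le _
  have hmlt : z / β < m + 1 := Int.lt_floor_add_one _
  have hc0 : 0 ≤ c := by
    have := (mul_le_mul_of_nonneg_right hmle hβ.le)
    rw [div_mul_cancel₀ _ hβ.ne'] at this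
    simp only [hcdef]; nlinarith
  have hcβ : c < β := by
    have := (mul_lt_mul_of_pos_right hmlt hβ)
    rw [div_mul_cancel₀ _ hβ.ne'] at this
    simp only [hcdef]; nlinarith
  have hsub : {o : ℝ | gridFloor β o z ≠ gridFloor β o z'} ∩ Icc 0 β ⊆
      Icc (max 0 (c - d)) c ∪ Ioc (c + β - d) β := by
    rintro o ⟨hne, ho0, hoβ⟩
    have hfne : ⌊(z - o) / β⌋ ≠ ⌊(z' - o) / β⌋ := by
      intro hE; apply hne; simp [gridFloor, hE]
    set n := ⌊(z - o) / β⌋ with hn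
    have hnle : (n : ℝ) ≤ (z - o) / β := Int.floor_le _
    have hnlt : (z - o) / β < n + 1 := Int.lt_floor_add_one _
    have h1 : (n : ℝ) * β ≤ z - o := (le_div_iff₀ hβ).mp hnle
    have hfr : (z - o) / β - n < d / β := by
      by_contra hge
      push_neg at hge
      apply hfne
      symm
      have hzo : (z' - o) / β = (z - o) / β - d / β := by
        field_simp [hdef]
        linarith [hdef]
      rw [hzo, Int.floor_eq_iff]
      constructor
      · linarith
      · have : 0 ≤ d / β := div_nonneg hd0 hβ.le
        push_cast
        linarith
    have h2 : z - o < d + (n : ℝ) * β := by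
      have hlt : (z - o) / β < d / β + n := by linarith
      have := (div_lt_iff₀ hβ).mp hlt
      have he : (d / β + (n : ℝ)) * β = d + n * β := by
        field_simp
      linarith [he ▸ this]
    -- z - n β ∈ [o, o + d)
    have hz1 : o ≤ z - (n : ℝ) * β := by linarith
    have hz2 : z - (n : ℝ) * β < o + d := by linarith
    have hkR : ((m - n : ℤ) : ℝ) * β = z - (n : ℝ) * β - c := by
      push_cast
      simp only [hcdef]
      ring
    have hklb : (-1 : ℝ) * β < ((m - n : ℤ) : ℝ) * β := by
      rw [hkR]; nlinarith
    have hkub : ((m - n : ℤ) : ℝ) * β < 2 * β := by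
      rw [hkR]; nlinarith
    have hklbZ : (-1 : ℤ) < m - n := by
      have : (-1 : ℝ) < ((m - n : ℤ) : ℝ) := lt_of_mul_lt_mul_right (by linarith) hβ.le
      exact_mod_cast this
    have hkubZ : m - n < 2 := by
      have : ((m - n : ℤ) : ℝ) < 2 := lt_of_mul_lt_mul_right (by linarith) hβ.le
      exact_mod_cast this
    have hk01 : m - n = 0 ∨ m - n = 1 := by omega
    rcases hk01 with hk | hk
    · -- z - n β = c
      have hznc : z - (n : ℝ) * β = c := by
        have := hkR; rw [hk] at this; push_cast at this; linarith
      left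
      refine ⟨max_le ho0 (by linarith), by linarith⟩
    · -- z - n β = c + β
      have hznc : z - (n : ℝ) * β = c + β := by
        have := hkR; rw [hk] at this; push_cast at this; linarith
      right
      exact ⟨by linarith, hoβ⟩
  have hvol : volume ({o : ℝ | gridFloor β o z ≠ gridFloor β o z'} ∩ Icc 0 β)
      ≤ ENNReal.ofReal d := by
    refine le_trans (measure_mono hsub) ?_
    refine le_trans (measure_union_le _ _) ?_
    rw [Real.volume_Icc, Real.volume_Ioc]
    rcases le_total d c with hdc | hcd
    · have hmax : max 0 (c - d) = c - d := max_eq_right (by linarith)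
      rw [hmax]
      have : ENNReal.ofReal (β - (c + β - d)) = 0 := by
        rw [ENNReal.ofReal_eq_zero]; linarith
      rw [this, add_zero]
      exact le_of_eq (by ring_nf)
    · have hmax : max 0 (c - d) = 0 := max_eq_left (by linarith)
      rw [hmax, sub_zero]
      have h2 : β - (c + β - d) = d - c := by ring
      rw [h2, ← ENNReal.ofReal_add hc0 (by linarith)]
      simp
  have hrw : unifMeas 0 β {o : ℝ | gridFloor β o z ≠ gridFloor β o z'}
      = (ENNReal.ofReal β)⁻¹
        * volume ({o : ℝ | gridFloor β o z ≠ gridFloor β o z'} ∩ Icc 0 β) := by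
    simp only [unifMeas, sub_zero, Measure.smul_apply, smul_eq_mul]
    rw [Measure.restrict_apply' measurableSet_Icc]
  rw [hrw, ENNReal.ofReal_div_of_pos hβ, div_eq_mul_inv, mul_comm]
  exact mul_le_mul_left hvol _

theorem stmt1 (β : ℝ) (hβ : 0 < β) (z z' : ℝ) (h : |z - z'| ≤ β) :
    unifMeas 0 β {o : ℝ | gridFloor β o z ≠ gridFloor β o z'}
      ≤ ENNReal.ofReal (|z - z'| / β) := by
  rcases le_total z' z with hle | hle
  · have habs : |z - z'| = z - z' := abs_of_nonneg (by linarith)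
    rw [habs] at h ⊢
    exact stmt1_aux β hβ z z' (by linarith) h
  · have habs : |z - z'| = z' - z := by rw [abs_sub_comm]; exact abs_of_nonneg (by linarith)
    rw [habs] at h ⊢
    have hset : {o : ℝ | gridFloor β o z ≠ gridFloor β o z'}
        = {o : ℝ | gridFloor β o z' ≠ gridFloor β o z} := by
      ext o; exact ne_comm
    rw [hset]
    exact stmt1_aux β hβ z' z (by linarith) h
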